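/- Let 1 ≤ p ≤ q ≤ ∞ and let v, w be positive weights on a countable index set I. Then the approximation numbers of the inclusion Id : ℓ^p_w(I) → ℓ^q_v(I) satisfy a_n(Id) ≤ s_{n+1}((v(i)/w(i))_{i ∈ I}) for all n ∈ ℕ, where s_{n+1} denotes the non-increasing rearrangement. -/

import Mathlib

open MeasureTheory ENNReal

/-- The `n`-th approximation number of a bounded operator `S : E → F`:
`a_n(S) = inf {‖S − T‖ : T bounded linear, rank T ≤ n}`. -/
noncomputable def approxNumber {E F : Type*} [NormedAddCommGroup E] [NormedSpace ℂ E]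
    [NormedAddCommGroup F] [NormedSpace ℂ F] (S : E →L[ℂ] F) (n : ℕ) : ℝ :=
  sInf {c : ℝ | ∃ T : E →L[ℂ] F,
    Module.rank ℂ (LinearMap.range (T : E →ₗ[ℂ] F)) ≤ n ∧ c = ‖S - T‖}

/-- The non-increasing rearrangement `s_n(h) = inf {σ ≥ 0 : #{i : |h i| ≥ σ} < n}`. -/
noncomputable def rearrangement {I : Type*} (h : I → ℝ) (n : ℕ) : ℝ :=
  sInf {σ : ℝ | 0 ≤ σ ∧ ∃ hfin : {i : I | σ ≤ |h i|}.Finite, hfin.toFinset.card < n}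

section Helpers

variable {I : Type*}

open scoped Classical in
/-- The `j`-th coordinate functional on `lp`. -/
noncomputable def lpCoord (p : ℝ≥0∞) [Fact (1 ≤ p)] (j : I) :
    lp (fun _ : I => ℂ) p →L[ℂ] ℂ :=
  LinearMap.mkContinuous
    { toFun := fun f => f j
      map_add' := fun f g => rfl
      map_smul' := fun c f => rfl }
    1 (fun f => by
      have hp0 : p ≠ 0 := (zero_lt_one.trans_le (Fact.out : (1 : ℝ≥0∞) ≤ p)).ne'
      rw [one_mul]; exact lp.norm_apply_le_norm hp0 f j)

@[simp] lemma lpCoord_apply (p : ℝ≥0∞) [Fact (1 ≤ p)] (j : I)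
    (f : lp (fun _ : I => ℂ) p) : lpCoord p j f = f j := rfl

lemma lp_norm_le_mul_norm_of_le {p q : ℝ≥0∞} [Fact (1 ≤ p)] [Fact (1 ≤ q)] (hpq : p ≤ q)
    (f : lp (fun _ : I => ℂ) p) (u : lp (fun _ : I => ℂ) q) {σ : ℝ} (hσ : 0 ≤ σ)
    (h : ∀ i, ‖u i‖ ≤ σ * ‖f i‖) : ‖u‖ ≤ σ * ‖f‖ := by
  have hp0 : p ≠ 0 := (zero_lt_one.trans_le (Fact.out : (1 : ℝ≥0∞) ≤ p)).ne'
  have hq0 : q ≠ 0 := (zero_lt_one.trans_le (Fact.out : (1 : ℝ≥0∞) ≤ q)).ne'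
  have hfi : ∀ i, ‖f i‖ ≤ ‖f‖ := lp.norm_apply_le_norm hp0 f
  by_cases hq : q = ∞
  · subst hq
    exact lp.norm_le_of_forall_le (mul_nonneg hσ (norm_nonneg f)) fun i =>
      (h i).trans (mul_le_mul_of_nonneg_left (hfi i) hσ)
  · have hp : p ≠ ∞ := fun h' => hq (top_le_iff.mp (h' ▸ hpq))
    have hpr : 0 < p.toReal := ENNReal.toReal_pos hp0 hp
    have hqr : 0 < q.toReal := ENNReal.toReal_pos hq0 hq
    have hle : p.toReal ≤ q.toReal := ENNReal.toReal_mono hq hpq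
    refine lp.norm_le_of_forall_sum_le hqr (mul_nonneg hσ (norm_nonneg f)) fun s => ?_
    have key : ∀ i, ‖u i‖ ^ q.toReal ≤
        σ ^ q.toReal * ‖f‖ ^ (q.toReal - p.toReal) * ‖f i‖ ^ p.toReal := by
      intro i
      calc ‖u i‖ ^ q.toReal ≤ (σ * ‖f i‖) ^ q.toReal :=
            Real.rpow_le_rpow (norm_nonneg _) (h i) hqr.le
        _ = σ ^ q.toReal * ‖f i‖ ^ q.toReal := Real.mul_rpow hσ (norm_nonneg _)
        _ = σ ^ q.toReal * (‖f i‖ ^ p.toReal * ‖f i‖ ^ (q.toReal - p.toReal)) := by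
            rw [← Real.rpow_add' (norm_nonneg _) (by rw [add_sub_cancel]; exact hqr.ne'),
              add_sub_cancel]
        _ ≤ σ ^ q.toReal * (‖f i‖ ^ p.toReal * ‖f‖ ^ (q.toReal - p.toReal)) :=
            mul_le_mul_of_nonneg_left
              (mul_le_mul_of_nonneg_left
                (Real.rpow_le_rpow (norm_nonneg _) (hfi i) (sub_nonneg.mpr hle))
                (Real.rpow_nonneg (norm_nonneg _) _))
              (Real.rpow_nonneg hσ _)
        _ = σ ^ q.toReal * ‖f‖ ^ (q.toReal - p.toReal) * ‖f i‖ ^ p.toReal := by ring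
    calc ∑ i ∈ s, ‖u i‖ ^ q.toReal
        ≤ ∑ i ∈ s, σ ^ q.toReal * ‖f‖ ^ (q.toReal - p.toReal) * ‖f i‖ ^ p.toReal :=
          Finset.sum_le_sum fun i _ => key i
      _ = σ ^ q.toReal * ‖f‖ ^ (q.toReal - p.toReal) * ∑ i ∈ s, ‖f i‖ ^ p.toReal := by
          rw [← Finset.mul_sum]
      _ ≤ σ ^ q.toReal * ‖f‖ ^ (q.toReal - p.toReal) * ‖f‖ ^ p.toReal :=
          mul_le_mul_of_nonneg_left (lp.sum_rpow_le_norm_rpow hpr f s)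
            (mul_nonneg (Real.rpow_nonneg hσ _) (Real.rpow_nonneg (norm_nonneg _) _))
      _ = (σ * ‖f‖) ^ q.toReal := by
          rw [Real.mul_rpow hσ (norm_nonneg f), mul_assoc,
            ← Real.rpow_add' (norm_nonneg f) (by rw [sub_add_cancel]; exact hqr.ne'),
            sub_add_cancel]

open scoped Classical in
lemma lp_norm_single_one_le (p : ℝ≥0∞) [Fact (1 ≤ p)] (i : I) :
    ‖(lp.single p i (1 : ℂ) : lp (fun _ : I => ℂ) p)‖ ≤ 1 := by
  have hp0 : p ≠ 0 := (zero_lt_one.trans_le (Fact.out : (1 : ℝ≥0∞) ≤ p)).ne'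
  by_cases hp : p = ∞
  · subst hp
    refine lp.norm_le_of_forall_le zero_le_one fun j => ?_
    rw [lp.single_apply, Pi.single_apply]
    split <;> simp
  · have hpr : 0 < p.toReal := ENNReal.toReal_pos hp0 hp
    have := lp.norm_single (E := fun _ : I => ℂ) (pos_iff_ne_zero.mpr hp0) i (1 : ℂ)
    rw [this]
    simp

end Helpers

/-- Let `1 ≤ p ≤ q ≤ ∞` and `v, w` positive weights on a countable index
set `I`. The approximation numbers of the inclusion `Id : ℓ^p_w(I) → ℓ^q_v(I)` (realized,
via the isometric identifications with `ℓ^p` and `ℓ^q`, as the diagonal operator with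
multiplier `v/w`) satisfy `a_n(Id) ≤ s_{n+1}((v i / w i)_i)`. -/
theorem approxNumber_diagonal_le_rearrangement
    {I : Type*} [Countable I] (p q : ℝ≥0∞) [Fact (1 ≤ p)] [Fact (1 ≤ q)] (hpq : p ≤ q)
    (w v : I → ℝ) (hw : ∀ i, 0 < w i) (hv : ∀ i, 0 < v i)
    (T : lp (fun _ : I => ℂ) p →L[ℂ] lp (fun _ : I => ℂ) q)
    (hT : ∀ (f : lp (fun _ : I => ℂ) p) (i : I), (T f : ∀ _ : I, ℂ) i = (v i / w i : ℝ) * f i) :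
    ∀ n : ℕ, approxNumber T n ≤ rearrangement (fun i => v i / w i) (n + 1) := by
  classical
  intro n
  set h : I → ℝ := fun i => v i / w i with hh
  have hpos : ∀ i, 0 < h i := fun i => div_pos (hv i) (hw i)
  have hp0 : p ≠ 0 := (zero_lt_one.trans_le (Fact.out : (1 : ℝ≥0∞) ≤ p)).ne'
  have hq0 : q ≠ 0 := (zero_lt_one.trans_le (Fact.out : (1 : ℝ≥0∞) ≤ q)).ne'
  -- the multiplier is bounded by ‖T‖
  have hbound : ∀ i, h i ≤ ‖T‖ := by
    intro i
    have h2 := hT (lp.single p i 1) i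
    rw [lp.single_apply_self] at h2
    have h3 := lp.norm_apply_le_norm hq0 (T (lp.single p i 1)) i
    rw [h2] at h3
    calc h i = ‖((h i : ℝ) : ℂ) * 1‖ := by
          simp [Complex.norm_real, abs_of_pos (hpos i)]
      _ ≤ ‖T (lp.single p i 1)‖ := h3
      _ ≤ ‖T‖ * ‖(lp.single p i (1 : ℂ) : lp (fun _ : I => ℂ) p)‖ := T.le_opNorm _
      _ ≤ ‖T‖ * 1 := mul_le_mul_of_nonneg_left (lp_norm_single_one_le p i) (norm_nonneg T)
      _ = ‖T‖ := mul_one _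
  -- the defining set of the rearrangement is nonempty
  have hne : {σ : ℝ | 0 ≤ σ ∧ ∃ hfin : {i : I | σ ≤ |h i|}.Finite,
      hfin.toFinset.card < n + 1}.Nonempty := by
    refine ⟨‖T‖ + 1, by positivity, ?_⟩
    have hempty : {i : I | ‖T‖ + 1 ≤ |h i|} = ∅ := by
      refine Set.eq_empty_of_forall_notMem fun i hi => ?_
      have habs : |h i| = h i := abs_of_pos (hpos i)
      have hgt : ‖T‖ + 1 ≤ h i := habs ▸ hi
      linarith [hbound i]
    have hfin' : {i : I | ‖T‖ + 1 ≤ |h i|}.Finite := hempty ▸ Set.finite_empty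
    refine ⟨hfin', ?_⟩
    have hte : hfin'.toFinset = ∅ := by
      rw [Set.Finite.toFinset_eq_empty]; exact hempty
    rw [hte]; simp
  refine le_csInf hne ?_
  rintro σ ⟨hσ0, hfin, hcard⟩
  set S : Finset I := hfin.toFinset with hS
  -- finite-rank truncation operator
  set P : lp (fun _ : I => ℂ) p →L[ℂ] lp (fun _ : I => ℂ) p :=
    ∑ j ∈ S, (lpCoord p j).smulRight (lp.single p j 1) with hP
  set T' := T.comp P with hT'
  have hPapp : ∀ (f : lp (fun _ : I => ℂ) p) (i : I),
      (P f : ∀ _ : I, ℂ) i = if i ∈ S then f i else 0 := by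
    intro f i
    rw [hP]
    rw [ContinuousLinearMap.sum_apply]
    rw [lp.coeFn_sum]
    rw [Finset.sum_apply]
    simp only [ContinuousLinearMap.smulRight_apply, lpCoord_apply, lp.coeFn_smul, Pi.smul_apply,
      lp.single_apply, Pi.single_apply]
    simp [Finset.sum_dite_eq]
  -- rank bound
  have hrank : Module.rank ℂ (LinearMap.range ((T' : lp (fun _ : I => ℂ) p →L[ℂ]
      lp (fun _ : I => ℂ) q) : lp (fun _ : I => ℂ) p →ₗ[ℂ] lp (fun _ : I => ℂ) q)) ≤ n := by
    have hcomp : ((T' : lp (fun _ : I => ℂ) p →L[ℂ] lp (fun _ : I => ℂ) q) :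
        lp (fun _ : I => ℂ) p →ₗ[ℂ] lp (fun _ : I => ℂ) q)
        = (T : lp (fun _ : I => ℂ) p →ₗ[ℂ] lp (fun _ : I => ℂ) q).comp
          (P : lp (fun _ : I => ℂ) p →ₗ[ℂ] lp (fun _ : I => ℂ) p) := rfl
    rw [hcomp]
    have h1 : LinearMap.rank ((T : lp (fun _ : I => ℂ) p →ₗ[ℂ] lp (fun _ : I => ℂ) q).comp
          (P : lp (fun _ : I => ℂ) p →ₗ[ℂ] lp (fun _ : I => ℂ) p))
        ≤ LinearMap.rank (P : lp (fun _ : I => ℂ) p →ₗ[ℂ] lp (fun _ : I => ℂ) p) :=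
      LinearMap.rank_comp_le_right _ _
    have h2 : LinearMap.range (P : lp (fun _ : I => ℂ) p →ₗ[ℂ] lp (fun _ : I => ℂ) p)
        ≤ Submodule.span ℂ ((fun j => (lp.single p j (1 : ℂ) : lp (fun _ : I => ℂ) p)) '' ↑S) := by
      rintro x ⟨f, rfl⟩
      have : P f = ∑ j ∈ S, f j • (lp.single p j (1 : ℂ) : lp (fun _ : I => ℂ) p) := by
        rw [hP, ContinuousLinearMap.sum_apply]
        simp [ContinuousLinearMap.smulRight_apply]
      rw [ContinuousLinearMap.coe_coe, this]
      exact Submodule.sum_mem _ fun j hj =>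
        Submodule.smul_mem _ _ (Submodule.subset_span ⟨j, hj, rfl⟩)
    have h3 : LinearMap.rank (P : lp (fun _ : I => ℂ) p →ₗ[ℂ] lp (fun _ : I => ℂ) p)
        ≤ (S.card : Cardinal) := by
      refine le_trans (Submodule.rank_mono h2) ?_
      refine le_trans (rank_span_le _) ?_
      refine le_trans Cardinal.mk_image_le ?_
      simp
    exact le_trans (le_trans h1 h3) (by exact_mod_cast Nat.lt_succ_iff.mp hcard)
  -- norm bound
  have hnorm : ‖T - T'‖ ≤ σ := by
    refine ContinuousLinearMap.opNorm_le_bound _ hσ0 fun f => ?_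
    have hcoord : ∀ i, ‖((T - T') f : ∀ _ : I, ℂ) i‖ ≤ σ * ‖f i‖ := by
      intro i
      have e1 : ((T - T') f : ∀ _ : I, ℂ) i = (T f : ∀ _ : I, ℂ) i - (T (P f) : ∀ _ : I, ℂ) i := by
        rw [ContinuousLinearMap.sub_apply, lp.coeFn_sub]
        rfl
      rw [e1, hT f i, hT (P f) i, hPapp f i]
      by_cases hi : i ∈ S
      · simp only [hi, if_true, sub_self, norm_zero]
        positivity
      · simp only [hi, if_false, mul_zero, sub_zero]
        have hlt : |h i| < σ := by
          by_contra hcon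
          exact hi (by rw [hS, Set.Finite.mem_toFinset]; exact not_lt.mp hcon)
        calc ‖((h i : ℝ) : ℂ) * (f i)‖ = |h i| * ‖f i‖ := by
              rw [norm_mul, Complex.norm_real, Real.norm_eq_abs]
          _ ≤ σ * ‖f i‖ := mul_le_mul_of_nonneg_right hlt.le (norm_nonneg _)
    exact lp_norm_le_mul_norm_of_le hpq f ((T - T') f) hσ0 hcoord
  have hbdd : BddBelow {c : ℝ | ∃ T'' : lp (fun _ : I => ℂ) p →L[ℂ] lp (fun _ : I => ℂ) q,
      Module.rank ℂ (LinearMap.range (T'' : lp (fun _ : I => ℂ) p →ₗ[ℂ]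
        lp (fun _ : I => ℂ) q)) ≤ n ∧ c = ‖T - T''‖} := by
    refine ⟨0, ?_⟩
    rintro c ⟨T'', -, rfl⟩
    exact norm_nonneg _
  exact (csInf_le hbdd ⟨T', hrank, rfl⟩).trans hnorm
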